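/- Let γ > 0 and 𝓜 ⊂ ℝ³ be a finite set of models such that for each M = (a,b,c) ∈ 𝓜 the Riccati equation P_M = (a²/(P_M + γ²c² − 1) + γ⁻²)⁻¹ has a positive solution P_M with P_M + γ²c² − 1 > 0. Then the following are equivalent: (i) there exists a causal output-feedback control policy μ* such that the closed-loop system is finite gain for every M ∈ 𝓜; (ii) there exists an observer-based control policy η*, i.e. a map producing u(t) = η*({(x̂_M(t), l_M(t+1)) : M ∈ 𝓜}, y(t)) from the current observer states, past costs and measurement, such that for every t ≥ 0 and every real sequence y(0),…,y(t), the past costs generated by the observer recursions under this policy satisfy l_M(t+1) ≤ 0 for all M ∈ 𝓜. Moreover, if η* satisfies (ii), then the causal policy μ*_t(y(0),…,y(t)) = η*({(x̂_M(t), l_M(t+1)) : M ∈ 𝓜}, y(t)) satisfies (i). -/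

import Mathlib

/- Models are triples `M = (a, b, c)` with `a = M.1`, `b = M.2.1`, `c = M.2.2`. -/

/-- Observer coefficient `â_M = a P_M / (P_M + γ²c² − 1)`. -/
noncomputable def ahat (γ : ℝ) (P : ℝ × ℝ × ℝ → ℝ) (M : ℝ × ℝ × ℝ) : ℝ :=
  M.1 * P M / (P M + γ ^ 2 * M.2.2 ^ 2 - 1)

/-- Observer coefficient `ĝ_M = γ² a c / (P_M + γ²c² − 1)`. -/
noncomputable def ghat (γ : ℝ) (P : ℝ × ℝ × ℝ → ℝ) (M : ℝ × ℝ × ℝ) : ℝ :=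
  γ ^ 2 * M.1 * M.2.2 / (P M + γ ^ 2 * M.2.2 ^ 2 - 1)

/-- One step of the past-cost recursion:
`l⁺ = l − P_M x̂² − γ² y² + (P_M x̂ + γ² c y)² / (P_M + γ²c² − 1)`. -/
noncomputable def lstep (γ : ℝ) (P : ℝ × ℝ × ℝ → ℝ) (M : ℝ × ℝ × ℝ)
    (xh l yt : ℝ) : ℝ :=
  l - P M * xh ^ 2 - γ ^ 2 * yt ^ 2
    + (P M * xh + γ ^ 2 * M.2.2 * yt) ^ 2 / (P M + γ ^ 2 * M.2.2 ^ 2 - 1)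

/-- Closed-loop observer/past-cost state under the observer-based policy `η`:
`clState γ P η y t M = (x̂_M(t), l_M(t))`, where at each step the control signal is
`u(t) = η (fun M => (x̂_M(t), l_M(t+1))) (y t)`. -/
noncomputable def clState (γ : ℝ) (P : ℝ × ℝ × ℝ → ℝ)
    (η : ((ℝ × ℝ × ℝ) → ℝ × ℝ) → ℝ → ℝ) (y : ℕ → ℝ) :
    ℕ → (ℝ × ℝ × ℝ) → ℝ × ℝ
  | 0 => fun _ => (0, 0)
  | t + 1 => fun M =>
      let s := clState γ P η y t
      let u := η (fun M' => ((s M').1, lstep γ P M' (s M').1 (s M').2 (y t))) (y t)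
      (ahat γ P M * (s M).1 + M.2.1 * u + ghat γ P M * y t,
        lstep γ P M (s M).1 (s M).2 (y t))

/-- The closed-loop control signal produced by the observer-based policy `η`:
`u(t) = η ({(x̂_M(t), l_M(t+1)) : M}, y(t))`. -/
noncomputable def clU (γ : ℝ) (P : ℝ × ℝ × ℝ → ℝ)
    (η : ((ℝ × ℝ × ℝ) → ℝ × ℝ) → ℝ → ℝ) (y : ℕ → ℝ) (t : ℕ) : ℝ :=
  η (fun M => ((clState γ P η y t M).1,
      lstep γ P M (clState γ P η y t M).1 (clState γ P η y t M).2 (y t))) (y t)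

/-- A causal output-feedback control policy: `μ t y` only depends on `y 0, …, y t`. -/
def Causal (μ : ℕ → (ℕ → ℝ) → ℝ) : Prop :=
  ∀ t (y y' : ℕ → ℝ), (∀ s ≤ t, y s = y' s) → μ t y = μ t y'

/-- The closed loop `x(t+1) = a x(t) + b u(t) + w(t)`, `y(t) = c x(t) + v(t)` with
`u(t) = μ t y` is finite gain for model `M`: for every `T`, every disturbance `w`,
noise `v` and initial state `x 0`,
`Σ_{τ≤T+1} x(τ)² − γ² Σ_{τ≤T} w(τ)² − γ² Σ_{τ≤T+1} v(τ)² − P_M x(0)² ≤ 0`. -/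
def FiniteGain (γ : ℝ) (P : ℝ × ℝ × ℝ → ℝ) (M : ℝ × ℝ × ℝ)
    (μ : ℕ → (ℕ → ℝ) → ℝ) : Prop :=
  ∀ x w v y : ℕ → ℝ,
    (∀ τ, x (τ + 1) = M.1 * x τ + M.2.1 * μ τ y + w τ) →
    (∀ τ, y τ = M.2.2 * x τ + v τ) →
    ∀ T : ℕ,
      ∑ τ ∈ Finset.range (T + 2), (x τ) ^ 2
        - γ ^ 2 * ∑ τ ∈ Finset.range (T + 1), (w τ) ^ 2
        - γ ^ 2 * ∑ τ ∈ Finset.range (T + 2), (v τ) ^ 2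
        - P M * (x 0) ^ 2 ≤ 0

-- observer chain under an output-feedback policy μ
noncomputable def obs (γ : ℝ) (P : ℝ × ℝ × ℝ → ℝ) (μ : ℕ → (ℕ → ℝ) → ℝ)
    (y : ℕ → ℝ) : ℕ → (ℝ × ℝ × ℝ) → ℝ × ℝ
  | 0 => fun _ => (0, 0)
  | t + 1 => fun M =>
      (ahat γ P M * (obs γ P μ y t M).1 + M.2.1 * μ t y + ghat γ P M * y t,
        lstep γ P M (obs γ P μ y t M).1 (obs γ P μ y t M).2 (y t))

lemma clState_succ (γ : ℝ) (P : ℝ × ℝ × ℝ → ℝ) (η : ((ℝ × ℝ × ℝ) → ℝ × ℝ) → ℝ → ℝ)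
    (y : ℕ → ℝ) (t : ℕ) (M : ℝ × ℝ × ℝ) :
    clState γ P η y (t+1) M
      = (ahat γ P M * (clState γ P η y t M).1 + M.2.1 * clU γ P η y t
          + ghat γ P M * y t,
        lstep γ P M (clState γ P η y t M).1 (clState γ P η y t M).2 (y t)) := rfl

lemma obs_succ (γ : ℝ) (P : ℝ × ℝ × ℝ → ℝ) (μ : ℕ → (ℕ → ℝ) → ℝ)
    (y : ℕ → ℝ) (t : ℕ) (M : ℝ × ℝ × ℝ) :
    obs γ P μ y (t+1) M
      = (ahat γ P M * (obs γ P μ y t M).1 + M.2.1 * μ t y + ghat γ P M * y t,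
        lstep γ P M (obs γ P μ y t M).1 (obs γ P μ y t M).2 (y t)) := rfl

lemma obs_cong (γ : ℝ) (P : ℝ × ℝ × ℝ → ℝ) (μ : ℕ → (ℕ → ℝ) → ℝ)
    (hμ : Causal μ) : ∀ t (y y' : ℕ → ℝ), (∀ s, s < t → y s = y' s) →
    obs γ P μ y t = obs γ P μ y' t := by
  intro t
  induction t with
  | zero => intro y y' _; rfl
  | succ t ih =>
      intro y y' h
      funext M
      have h1 := ih y y' (fun s hs => h s (Nat.lt_succ_of_lt hs))
      have h2 : μ t y = μ t y' := hμ t y y' (fun s hs => h s (Nat.lt_succ_of_le hs))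
      rw [obs_succ, obs_succ, h1, h2, h t (Nat.lt_succ_self t)]

lemma clState_cong (γ : ℝ) (P : ℝ × ℝ × ℝ → ℝ) (η : ((ℝ × ℝ × ℝ) → ℝ × ℝ) → ℝ → ℝ) :
    ∀ t (y y' : ℕ → ℝ), (∀ s, s < t → y s = y' s) →
    clState γ P η y t = clState γ P η y' t := by
  intro t
  induction t with
  | zero => intro y y' _; rfl
  | succ t ih =>
      intro y y' h
      funext M
      have h1 := ih y y' (fun s hs => h s (Nat.lt_succ_of_lt hs))
      have h2 : y t = y' t := h t (Nat.lt_succ_self t)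
      rw [clState_succ, clState_succ, h1, h2]
      unfold clU
      rw [h1, h2]

lemma clU_causal (γ : ℝ) (P : ℝ × ℝ × ℝ → ℝ) (η : ((ℝ × ℝ × ℝ) → ℝ × ℝ) → ℝ → ℝ) :
    Causal (fun t y => clU γ P η y t) := by
  intro t y y' h
  simp only []
  unfold clU
  rw [clState_cong γ P η t y y' (fun s hs => h s (le_of_lt hs)), h t le_rfl]


lemma key1 (γ Q c x xh l y : ℝ) (hX : Q + γ^2*c^2 - 1 ≠ 0) :
    (l - Q*xh^2 - γ^2*y^2 + (Q*xh + γ^2*c*y)^2/(Q+γ^2*c^2-1)) - l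
      + Q*(x-xh)^2 - x^2 + γ^2*(y-c*x)^2
    = ((Q+γ^2*c^2-1)*x - Q*xh - γ^2*c*y)^2/(Q+γ^2*c^2-1) := by
  field_simp
  ring

lemma key2 (γ Q a X w e' K : ℝ) (hX : X ≠ 0) (hq : γ^2*X = Q*a^2*γ^2 + Q*X)
    (h2 : X*e' = X*w + a*K) :
    Q*X*(γ^2*w^2) + Q*K^2 - Q^2*X*e'^2 = γ^2*(Q*a*e' - K)^2 := by
  have h4 : X*((Q*X*(γ^2*w^2) + Q*K^2 - Q^2*X*e'^2) - γ^2*(Q*a*e' - K)^2) = 0 := by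
    rw [show X*((Q*X*(γ^2*w^2) + Q*K^2 - Q^2*X*e'^2) - γ^2*(Q*a*e' - K)^2)
      = (Q*X*e'^2 - K^2)*(γ^2*X - Q*a^2*γ^2 - Q*X)
        - Q*γ^2*(X*e' - a*K + X*w)*(X*e' - X*w - a*K) by ring,
      show γ^2*X - Q*a^2*γ^2 - Q*X = 0 by linarith,
      show X*e' - X*w - a*K = 0 by linarith]; ring
  rcases mul_eq_zero.mp h4 with h | h
  · exact absurd h hX
  · linarith

lemma ric_prod (γ Q a X : ℝ) (hγ : 0 < γ) (hXp : 0 < X)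
    (hRic : Q = (a^2/X + (γ^2)⁻¹)⁻¹) :
    γ^2*X = Q*a^2*γ^2 + Q*X := by
  have hg : (0:ℝ) < γ^2 := by positivity
  have hs : 0 < a^2/X + (γ^2)⁻¹ := by positivity
  have h1 : Q * (a^2/X + (γ^2)⁻¹) = 1 := by
    rw [hRic]; field_simp
  have hX : X ≠ 0 := ne_of_gt hXp
  have hg' : (γ:ℝ)^2 ≠ 0 := ne_of_gt hg
  field_simp at h1
  nlinarith [h1]

section Steps

variable (γ : ℝ) (P : ℝ × ℝ × ℝ → ℝ) (M : ℝ × ℝ × ℝ)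

lemma erel (hX : P M + γ^2*M.2.2^2 - 1 ≠ 0) (x xh u w v y x' xh' : ℝ)
    (hdyn : x' = M.1*x + M.2.1*u + w) (hmeas : y = M.2.2*x + v)
    (hobs : xh' = ahat γ P M * xh + M.2.1*u + ghat γ P M * y) :
    (P M + γ^2*M.2.2^2 - 1)*(x' - xh')
      = (P M + γ^2*M.2.2^2 - 1)*w
        + M.1*((P M + γ^2*M.2.2^2 - 1)*x - P M*xh - γ^2*M.2.2*y) := by
  rw [hdyn, hobs]
  unfold ahat ghat
  field_simp
  ring

lemma stepIneq (hγ : 0 < γ) (hP : 0 < P M) (hXp : 0 < P M + γ^2*M.2.2^2 - 1)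
    (hRic : P M = (M.1^2/(P M + γ^2*M.2.2^2 - 1) + (γ^2)⁻¹)⁻¹)
    (x xh l u w v y x' xh' : ℝ)
    (hdyn : x' = M.1*x + M.2.1*u + w) (hmeas : y = M.2.2*x + v)
    (hobs : xh' = ahat γ P M * xh + M.2.1*u + ghat γ P M * y) :
    x^2 - γ^2*w^2 - γ^2*v^2
      ≤ (lstep γ P M xh l y - P M*(x'-xh')^2) - (l - P M*(x-xh)^2) := by
  have hX : P M + γ^2*M.2.2^2 - 1 ≠ 0 := ne_of_gt hXp
  set X := P M + γ^2*M.2.2^2 - 1 with hXdef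
  set K := X*x - P M*xh - γ^2*M.2.2*y with hK
  have h1 : lstep γ P M xh l y - l + P M*(x-xh)^2 - x^2 + γ^2*(y-M.2.2*x)^2 = K^2/X := by
    have := key1 γ (P M) M.2.2 x xh l y hX
    unfold lstep
    convert this using 2
  have h2 := erel γ P M hX x xh u w v y x' xh' hdyn hmeas hobs
  have hq := ric_prod γ (P M) M.1 X hγ hXp hRic
  have h3 := key2 γ (P M) M.1 X w (x'-xh') K hX hq (by rw [hK]; exact h2)
  have h5 : 0 ≤ γ^2*(P M*M.1*(x'-xh') - K)^2 := by positivity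
  have hPX : (0:ℝ) < P M * X := mul_pos hP hXp
  have h6' : γ^2*w^2 + K^2/X - P M*(x'-xh')^2
      = γ^2*(P M*M.1*(x'-xh') - K)^2 / (P M * X) := by
    rw [eq_div_iff (ne_of_gt hPX)]
    have hK2 : K^2/X * (P M * X) = P M * K^2 := by
      rw [mul_comm (P M) X, ← mul_assoc, div_mul_cancel₀ _ hX]; ring
    linear_combination hK2 + h3
  have h6'' : 0 ≤ γ^2*(P M*M.1*(x'-xh') - K)^2 / (P M * X) := by positivity
  have h6 : P M*(x'-xh')^2 ≤ γ^2*w^2 + K^2/X := by linarith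
  have hv : y - M.2.2*x = v := by rw [hmeas]; ring
  rw [hv] at h1
  linarith

lemma stepIneqB (hγ : 0 < γ) (hXp : 0 < P M + γ^2*M.2.2^2 - 1)
    (x xh l v y : ℝ) (hmeas : y = M.2.2*x + v) :
    x^2 - γ^2*v^2 ≤ lstep γ P M xh l y - (l - P M*(x-xh)^2) := by
  have hX : P M + γ^2*M.2.2^2 - 1 ≠ 0 := ne_of_gt hXp
  set X := P M + γ^2*M.2.2^2 - 1 with hXdef
  have h1 : lstep γ P M xh l y - l + P M*(x-xh)^2 - x^2 + γ^2*(y-M.2.2*x)^2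
      = (X*x - P M*xh - γ^2*M.2.2*y)^2/X := by
    have := key1 γ (P M) M.2.2 x xh l y hX
    unfold lstep
    convert this using 2
  have h2 : 0 ≤ (X*x - P M*xh - γ^2*M.2.2*y)^2/X := by positivity
  have hv : y - M.2.2*x = v := by rw [hmeas]; ring
  rw [hv] at h1
  linarith

lemma stepEq (hγ : 0 < γ) (hP : 0 < P M) (hXp : 0 < P M + γ^2*M.2.2^2 - 1)
    (hRic : P M = (M.1^2/(P M + γ^2*M.2.2^2 - 1) + (γ^2)⁻¹)⁻¹)
    (x xh l u w v y x' xh' : ℝ)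
    (hdyn : x' = M.1*x + M.2.1*u + w) (hmeas : y = M.2.2*x + v)
    (hobs : xh' = ahat γ P M * xh + M.2.1*u + ghat γ P M * y)
    (hstar : (P M + γ^2*M.2.2^2 - 1)*x
        = P M*M.1*(x'-xh') + P M*xh + γ^2*M.2.2*y) :
    (lstep γ P M xh l y - P M*(x'-xh')^2) - (l - P M*(x-xh)^2)
      = x^2 - γ^2*w^2 - γ^2*v^2 := by
  have hX : P M + γ^2*M.2.2^2 - 1 ≠ 0 := ne_of_gt hXp
  set X := P M + γ^2*M.2.2^2 - 1 with hXdef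
  set K := X*x - P M*xh - γ^2*M.2.2*y with hK
  have h1 : lstep γ P M xh l y - l + P M*(x-xh)^2 - x^2 + γ^2*(y-M.2.2*x)^2 = K^2/X := by
    have := key1 γ (P M) M.2.2 x xh l y hX
    unfold lstep
    convert this using 2
  have h2 := erel γ P M hX x xh u w v y x' xh' hdyn hmeas hobs
  have hq := ric_prod γ (P M) M.1 X hγ hXp hRic
  have h3 := key2 γ (P M) M.1 X w (x'-xh') K hX hq (by rw [hK]; exact h2)
  have hKeq : K = P M*M.1*(x'-xh') := by rw [hK]; linarith [hstar]
  have hPX : (0:ℝ) < P M * X := mul_pos hP hXp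
  have h6' : γ^2*w^2 + K^2/X - P M*(x'-xh')^2
      = γ^2*(P M*M.1*(x'-xh') - K)^2 / (P M * X) := by
    rw [eq_div_iff (ne_of_gt hPX)]
    have hK2 : K^2/X * (P M * X) = P M * K^2 := by
      rw [mul_comm (P M) X, ← mul_assoc, div_mul_cancel₀ _ hX]; ring
    linear_combination hK2 + h3
  rw [← hKeq] at h6'
  simp only [sub_self] at h6'
  have h7 : γ^2*w^2 + K^2/X - P M*(x'-xh')^2 = 0 := by
    rw [h6']; ring
  have hv : y - M.2.2*x = v := by rw [hmeas]; ring
  rw [hv] at h1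
  linarith

end Steps


lemma fgOf (γ : ℝ) (P : ℝ × ℝ × ℝ → ℝ) (M : ℝ × ℝ × ℝ)
    (hγ : 0 < γ) (hP : 0 < P M) (hXp : 0 < P M + γ^2*M.2.2^2 - 1)
    (hRic : P M = (M.1^2/(P M + γ^2*M.2.2^2 - 1) + (γ^2)⁻¹)⁻¹)
    (η : ((ℝ × ℝ × ℝ) → ℝ × ℝ) → ℝ → ℝ)
    (hη : ∀ y : ℕ → ℝ, ∀ t : ℕ, (clState γ P η y (t + 1) M).2 ≤ 0)
    (x w v y : ℕ → ℝ)
    (hdyn : ∀ τ, x (τ + 1) = M.1 * x τ + M.2.1 * clU γ P η y τ + w τ)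
    (hmeas : ∀ τ, y τ = M.2.2 * x τ + v τ) (T : ℕ) :
    ∑ τ ∈ Finset.range (T + 2), (x τ) ^ 2
      - γ ^ 2 * ∑ τ ∈ Finset.range (T + 1), (w τ) ^ 2
      - γ ^ 2 * ∑ τ ∈ Finset.range (T + 2), (v τ) ^ 2
      - P M * (x 0) ^ 2 ≤ 0 := by
  set xh : ℕ → ℝ := fun τ => (clState γ P η y τ M).1 with hxh
  set l : ℕ → ℝ := fun τ => (clState γ P η y τ M).2 with hl
  set V : ℕ → ℝ := fun τ => l τ - P M * (x τ - xh τ)^2 with hV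
  have hobs : ∀ τ, xh (τ+1) = ahat γ P M * xh τ + M.2.1 * clU γ P η y τ
      + ghat γ P M * y τ := by
    intro τ; rw [hxh]; simp only [clState_succ]
  have hlstep : ∀ τ, l (τ+1) = lstep γ P M (xh τ) (l τ) (y τ) := by
    intro τ; rw [hl]; simp only [clState_succ]; rfl
  have step : ∀ τ, x τ^2 - γ^2*(w τ)^2 - γ^2*(v τ)^2 ≤ V (τ+1) - V τ := by
    intro τ
    have h := stepIneq γ P M hγ hP hXp hRic (x τ) (xh τ) (l τ) (clU γ P η y τ)
      (w τ) (v τ) (y τ) (x (τ+1)) (xh (τ+1)) (hdyn τ) (hmeas τ) (hobs τ)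
    rw [hV]
    simp only []
    rw [hlstep τ] at *
    linarith
  have htel : ∑ τ ∈ Finset.range (T+1), (V (τ+1) - V τ) = V (T+1) - V 0 :=
    Finset.sum_range_sub V (T+1)
  have hsum : ∑ τ ∈ Finset.range (T+1), (x τ^2 - γ^2*(w τ)^2 - γ^2*(v τ)^2)
      ≤ V (T+1) - V 0 := by
    rw [← htel]
    exact Finset.sum_le_sum (fun τ _ => step τ)
  have hV0 : V 0 = - (P M * (x 0)^2) := by
    rw [hV, hl, hxh]
    show (clState γ P η y 0 M).2 - P M * (x 0 - (clState γ P η y 0 M).1)^2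
      = -(P M * (x 0)^2)
    show (0:ℝ) - P M * (x 0 - 0)^2 = -(P M * (x 0)^2)
    ring
  have hB : x (T+1)^2 - γ^2*(v (T+1))^2 ≤ l (T+2) - V (T+1) := by
    have h := stepIneqB γ P M hγ hXp (x (T+1)) (xh (T+1)) (l (T+1)) (v (T+1))
      (y (T+1)) (hmeas (T+1))
    rw [hV]
    simp only []
    rw [hlstep (T+1)] at *
    linarith
  have hle : l (T+2) ≤ 0 := hη y (T+1)
  have hsplit : ∑ τ ∈ Finset.range (T+1), (x τ^2 - γ^2*(w τ)^2 - γ^2*(v τ)^2)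
      = ∑ τ ∈ Finset.range (T+1), (x τ)^2
        - γ^2 * ∑ τ ∈ Finset.range (T+1), (w τ)^2
        - γ^2 * ∑ τ ∈ Finset.range (T+1), (v τ)^2 := by
    rw [Finset.mul_sum, Finset.mul_sum, ← Finset.sum_sub_distrib,
      ← Finset.sum_sub_distrib]
  have e2 : T + 2 = (T + 1) + 1 := rfl
  rw [e2, Finset.sum_range_succ (fun τ => (x τ)^2) (T+1),
    Finset.sum_range_succ (fun τ => (v τ)^2) (T+1)]
  linarith [hsum, hB, hle]

/-- Backward construction of the worst-case trajectory: `bz γ P μ y M t j = x(t+1-j)`. -/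
noncomputable def bz (γ : ℝ) (P : ℝ × ℝ × ℝ → ℝ) (μ : ℕ → (ℕ → ℝ) → ℝ)
    (y : ℕ → ℝ) (M : ℝ × ℝ × ℝ) (t : ℕ) : ℕ → ℝ
  | 0 => (obs γ P μ y (t+1) M).1
  | j + 1 => (P M * M.1 * (bz γ P μ y M t j - (obs γ P μ y (t+1-j) M).1)
      + P M * (obs γ P μ y (t-j) M).1 + γ^2 * M.2.2 * y (t-j))
      / (P M + γ^2*M.2.2^2 - 1)

lemma pastcost_nonpos (γ : ℝ) (P : ℝ × ℝ × ℝ → ℝ) (M : ℝ × ℝ × ℝ)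
    (hγ : 0 < γ) (hP : 0 < P M) (hXp : 0 < P M + γ^2*M.2.2^2 - 1)
    (hRic : P M = (M.1^2/(P M + γ^2*M.2.2^2 - 1) + (γ^2)⁻¹)⁻¹)
    (μ : ℕ → (ℕ → ℝ) → ℝ) (hc : Causal μ) (hfg : FiniteGain γ P M μ)
    (y : ℕ → ℝ) (t : ℕ) : (obs γ P μ y (t+1) M).2 ≤ 0 := by
  have hX : P M + γ^2*M.2.2^2 - 1 ≠ 0 := ne_of_gt hXp
  -- the worst-case trajectory
  obtain ⟨x, hx⟩ : ∃ x : ℕ → ℝ, ∀ τ,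
      x τ = if τ ≤ t+1 then bz γ P μ y M t (t+1-τ) else 0 := ⟨_, fun τ => rfl⟩
  -- modified measurements
  obtain ⟨z, hz⟩ : ∃ z : ℕ → ℝ, ∀ τ,
      z τ = if τ ≤ t then y τ else M.2.2 * x τ := ⟨_, fun τ => rfl⟩
  obtain ⟨w, hw⟩ : ∃ w : ℕ → ℝ, ∀ τ,
      w τ = x (τ+1) - M.1 * x τ - M.2.1 * μ τ z := ⟨_, fun τ => rfl⟩
  obtain ⟨v, hv⟩ : ∃ v : ℕ → ℝ, ∀ τ, v τ = z τ - M.2.2 * x τ := ⟨_, fun τ => rfl⟩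
  -- agreement of the two observer chains up to time t+1
  have hyz : ∀ s, s ≤ t → y s = z s := by
    intro s hs; rw [hz s, if_pos hs]
  have hagree : ∀ τ, τ ≤ t+1 → obs γ P μ y τ = obs γ P μ z τ := by
    intro τ hτ
    exact obs_cong γ P μ hc τ y z (fun s hs => hyz s (by omega))
  set xh : ℕ → ℝ := fun τ => (obs γ P μ z τ M).1 with hxh
  set l : ℕ → ℝ := fun τ => (obs γ P μ z τ M).2 with hl
  set V : ℕ → ℝ := fun τ => l τ - P M * (x τ - xh τ)^2 with hV
  -- x at t+1 equals the observer state
  have hxt1 : x (t+1) = xh (t+1) := by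
    rw [hx, if_pos (le_refl (t+1)), Nat.sub_self]
    show (obs γ P μ y (t+1) M).1 = xh (t+1)
    rw [hxh, hagree (t+1) le_rfl]
  -- the optimality relation at each time τ ≤ t
  have hstar : ∀ τ, τ ≤ t →
      (P M + γ^2*M.2.2^2 - 1) * x τ
        = P M * M.1 * (x (τ+1) - xh (τ+1)) + P M * xh τ + γ^2 * M.2.2 * z τ := by
    intro τ hτ
    have e1 : t+1-τ = (t-τ)+1 := by omega
    have e2 : t+1-(t-τ) = τ+1 := by omega
    have e3 : t-(t-τ) = τ := by omega
    have e4 : x (τ+1) = bz γ P μ y M t (t-τ) := by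
      rw [hx, if_pos (by omega : τ+1 ≤ t+1)]
      congr 1
      omega
    have e5 : x τ = (P M * M.1 * (bz γ P μ y M t (t-τ) - (obs γ P μ y (τ+1) M).1)
        + P M * (obs γ P μ y τ M).1 + γ^2 * M.2.2 * y τ) / (P M + γ^2*M.2.2^2 - 1) := by
      rw [hx, if_pos (by omega : τ ≤ t+1), e1]
      show bz γ P μ y M t ((t-τ)+1) = _
      rw [bz, e2, e3]
    have h6 : xh τ = (obs γ P μ y τ M).1 := by
      rw [hxh]; simp only []; rw [← hagree τ (by omega)]
    have h7 : xh (τ+1) = (obs γ P μ y (τ+1) M).1 := by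
      rw [hxh]; simp only []; rw [← hagree (τ+1) (by omega)]
    have h8 : z τ = y τ := (hyz τ hτ).symm
    rw [h6, h7, h8, e4]
    rw [eq_div_iff hX] at e5
    linarith [e5]
  -- per-step equalities along the optimal trajectory
  have hstep : ∀ τ, τ ≤ t → V (τ+1) - V τ = x τ^2 - γ^2*(w τ)^2 - γ^2*(v τ)^2 := by
    intro τ hτ
    have hobs' : xh (τ+1) = ahat γ P M * xh τ + M.2.1 * μ τ z + ghat γ P M * z τ := by
      rw [hxh]; simp only [obs_succ]
    have hl' : l (τ+1) = lstep γ P M (xh τ) (l τ) (z τ) := by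
      rw [hl]; simp only [obs_succ]; rfl
    have h := stepEq γ P M hγ hP hXp hRic (x τ) (xh τ) (l τ) (μ τ z)
      (w τ) (v τ) (z τ) (x (τ+1)) (xh (τ+1))
      (by rw [hw τ]; ring) (by rw [hv τ]; ring) hobs' (hstar τ hτ)
    rw [hV]
    simp only []
    rw [hl'] at *
    linarith [h]
  have htel : V (t+1) - V 0
      = ∑ τ ∈ Finset.range (t+1), (x τ^2 - γ^2*(w τ)^2 - γ^2*(v τ)^2) := by
    rw [← Finset.sum_range_sub V (t+1)]
    exact Finset.sum_congr rfl
      (fun τ hτ => hstep τ (Nat.lt_succ_iff.mp (Finset.mem_range.mp hτ)))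
  have hV0 : V 0 = -(P M * (x 0)^2) := by
    rw [hV, hl, hxh]
    show (obs γ P μ z 0 M).2 - P M * (x 0 - (obs γ P μ z 0 M).1)^2 = -(P M * (x 0)^2)
    show (0:ℝ) - P M * (x 0 - 0)^2 = -(P M * (x 0)^2)
    ring
  have hvt1 : v (t+1) = 0 := by
    rw [hv, hz, if_neg (by omega)]; ring
  have hVt1 : V (t+1) = l (t+1) := by
    rw [hV]; simp only []; rw [hxt1]; ring
  have hFG := hfg x w v z (fun τ => by rw [hw τ]; ring)
    (fun τ => by rw [hv τ]; ring) t
  have hsplit : ∑ τ ∈ Finset.range (t+1), (x τ^2 - γ^2*(w τ)^2 - γ^2*(v τ)^2)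
      = ∑ τ ∈ Finset.range (t+1), (x τ)^2
        - γ^2 * ∑ τ ∈ Finset.range (t+1), (w τ)^2
        - γ^2 * ∑ τ ∈ Finset.range (t+1), (v τ)^2 := by
    rw [Finset.mul_sum, Finset.mul_sum, ← Finset.sum_sub_distrib,
      ← Finset.sum_sub_distrib]
  have e2 : t + 2 = (t + 1) + 1 := rfl
  rw [e2, Finset.sum_range_succ (fun τ => (x τ)^2) (t+1),
    Finset.sum_range_succ (fun τ => (v τ)^2) (t+1)] at hFG
  simp only [hvt1] at hFG
  have hgoal : (obs γ P μ y (t+1) M).2 = l (t+1) := by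
    rw [hl]; simp only []; rw [hagree (t+1) le_rfl]
  rw [hgoal]
  nlinarith [sq_nonneg (x (t+1)), hFG, htel, hV0, hVt1, hsplit]

/-- Information-state function generated by policy `μ` along history `y` at time `t`. -/
noncomputable def infoOf (γ : ℝ) (P : ℝ × ℝ × ℝ → ℝ) (μ : ℕ → (ℕ → ℝ) → ℝ)
    (y : ℕ → ℝ) (t : ℕ) : (ℝ × ℝ × ℝ) → ℝ × ℝ :=
  fun M => ((obs γ P μ y t M).1,
    lstep γ P M (obs γ P μ y t M).1 (obs γ P μ y t M).2 (y t))

open Classical in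
/-- The observer-based policy induced by an output-feedback policy `μ`. -/
noncomputable def etaOf (γ : ℝ) (P : ℝ × ℝ × ℝ → ℝ) (μ : ℕ → (ℕ → ℝ) → ℝ) :
    ((ℝ × ℝ × ℝ) → ℝ × ℝ) → ℝ → ℝ := fun f yt =>
  if h : ∃ p : ℕ × (ℕ → ℝ), infoOf γ P μ p.2 p.1 = f ∧ p.2 p.1 = yt
  then μ h.choose.1 h.choose.2 else 0

lemma inv_succ (γ : ℝ) (P : ℝ × ℝ × ℝ → ℝ) (μ : ℕ → (ℕ → ℝ) → ℝ)
    (y : ℕ → ℝ) (t t' : ℕ) (y' : ℕ → ℝ)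
    (hs : ∀ M, clState γ P (etaOf γ P μ) y t M = obs γ P μ y' t' M)
    (hy : y' t' = y t) :
    ∃ (t₂ : ℕ) (y₂ : ℕ → ℝ),
      (∀ M, clState γ P (etaOf γ P μ) y (t+1) M = obs γ P μ y₂ (t₂+1) M)
        ∧ y₂ t₂ = y t := by
  classical
  set η := etaOf γ P μ with hη
  set f : (ℝ × ℝ × ℝ) → ℝ × ℝ := fun M' => ((clState γ P η y t M').1,
      lstep γ P M' (clState γ P η y t M').1 (clState γ P η y t M').2 (y t)) with hf
  have hex : ∃ p : ℕ × (ℕ → ℝ), infoOf γ P μ p.2 p.1 = f ∧ p.2 p.1 = y t := by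
    refine ⟨(t', y'), ?_, hy⟩
    funext M
    simp only [infoOf, hf, hs M, hy]
  obtain ⟨hG, hyc⟩ := hex.choose_spec
  have hu : η f (y t) = μ hex.choose.1 hex.choose.2 := by
    rw [hη]
    unfold etaOf
    rw [dif_pos hex]
  refine ⟨hex.choose.1, hex.choose.2, fun M => ?_, hyc⟩
  have hpair := congrFun hG M
  simp only [infoOf, hf] at hpair
  rw [Prod.mk.injEq] at hpair
  obtain ⟨hG1, hG2⟩ := hpair
  rw [clState_succ, obs_succ]
  rw [show clU γ P η y t = η f (y t) from rfl, hu]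
  rw [Prod.mk.injEq]
  constructor
  · rw [hG1, hyc]
  · exact hG2.symm

lemma inv_all (γ : ℝ) (P : ℝ × ℝ × ℝ → ℝ) (μ : ℕ → (ℕ → ℝ) → ℝ)
    (hc : Causal μ) (y : ℕ → ℝ) : ∀ t, ∃ (t' : ℕ) (y' : ℕ → ℝ),
      (∀ M, clState γ P (etaOf γ P μ) y t M = obs γ P μ y' t' M) ∧ y' t' = y t := by
  intro t
  induction t with
  | zero => exact ⟨0, y, fun M => rfl, rfl⟩
  | succ t ih =>
      obtain ⟨t', y', hs, hy⟩ := ih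
      obtain ⟨t₂, y₂, hs2, _⟩ := inv_succ γ P μ y t t' y' hs hy
      refine ⟨t₂+1, Function.update y₂ (t₂+1) (y (t+1)), fun M => ?_, ?_⟩
      · rw [hs2 M]
        have := obs_cong γ P μ hc (t₂+1) y₂ (Function.update y₂ (t₂+1) (y (t+1)))
          (fun s hs => (Function.update_of_ne (by omega) _ _).symm)
        rw [this]
      · simp [Function.update_self]

/-- **Observer-based feedback** (Theorem 2).  (i) there is a causal output-feedback
policy rendering the closed loop finite gain for every `M ∈ 𝓜` iff (ii) there is an
observer-based policy `η` keeping every past cost `l_M(t+1)` nonpositive along every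
measurement sequence.  Moreover, any `η` satisfying (ii) induces, via
`μ t y = clU γ P η y t`, a causal policy satisfying (i). -/
theorem observer_based_feedback
    (γ : ℝ) (hγ : 0 < γ) (𝓜 : Finset (ℝ × ℝ × ℝ))
    (P : ℝ × ℝ × ℝ → ℝ)
    (hPpos : ∀ M ∈ 𝓜, 0 < P M)
    (hXpos : ∀ M ∈ 𝓜, 0 < P M + γ ^ 2 * M.2.2 ^ 2 - 1)
    (hRic : ∀ M ∈ 𝓜,
      P M = (M.1 ^ 2 / (P M + γ ^ 2 * M.2.2 ^ 2 - 1) + (γ ^ 2)⁻¹)⁻¹) :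
    ((∃ μ : ℕ → (ℕ → ℝ) → ℝ, Causal μ ∧ ∀ M ∈ 𝓜, FiniteGain γ P M μ) ↔
      (∃ η : ((ℝ × ℝ × ℝ) → ℝ × ℝ) → ℝ → ℝ,
        ∀ y : ℕ → ℝ, ∀ t : ℕ, ∀ M ∈ 𝓜, (clState γ P η y (t + 1) M).2 ≤ 0))
    ∧
    (∀ η : ((ℝ × ℝ × ℝ) → ℝ × ℝ) → ℝ → ℝ,
      (∀ y : ℕ → ℝ, ∀ t : ℕ, ∀ M ∈ 𝓜, (clState γ P η y (t + 1) M).2 ≤ 0) →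
      Causal (fun t y => clU γ P η y t) ∧
        ∀ M ∈ 𝓜, FiniteGain γ P M (fun t y => clU γ P η y t)) := by
  have moreover : ∀ η : ((ℝ × ℝ × ℝ) → ℝ × ℝ) → ℝ → ℝ,
      (∀ y : ℕ → ℝ, ∀ t : ℕ, ∀ M ∈ 𝓜, (clState γ P η y (t + 1) M).2 ≤ 0) →
      Causal (fun t y => clU γ P η y t) ∧
        ∀ M ∈ 𝓜, FiniteGain γ P M (fun t y => clU γ P η y t) := by
    intro η hη
    refine ⟨clU_causal γ P η, fun M hM x w v y hdyn hmeas T => ?_⟩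
    exact fgOf γ P M hγ (hPpos M hM) (hXpos M hM) (hRic M hM) η
      (fun y t => hη y t M hM) x w v y hdyn hmeas T
  refine ⟨⟨?_, ?_⟩, moreover⟩
  · rintro ⟨μ, hc, hfg⟩
    refine ⟨etaOf γ P μ, fun y t M hM => ?_⟩
    obtain ⟨t', y', hs, hy⟩ := inv_all γ P μ hc y t
    obtain ⟨t₂, y₂, hs2, _⟩ := inv_succ γ P μ y t t' y' hs hy
    rw [hs2 M]
    exact pastcost_nonpos γ P M hγ (hPpos M hM) (hXpos M hM) (hRic M hM)
      μ hc (hfg M hM) y₂ t₂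
  · rintro ⟨η, hη⟩
    exact ⟨fun t y => clU γ P η y t, (moreover η hη).1, (moreover η hη).2⟩
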